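/- Let k ≥ 1, let S, S' ⊆ [0,k] be subsets of the same size n, and let g : S → S' be a bijection such that g(i) ∈ {i−1, i, i+1} for every i ∈ S. Then there exists a collection of pairwise disjoint subintervals I_1, …, I_r ⊆ [0,k] such that: S ∖ (I_1 ∪ … ∪ I_r) = S' ∖ (I_1 ∪ … ∪ I_r); g(i) = i for every i ∈ S ∖ (I_1 ∪ … ∪ I_r); and each I_j satisfies one of the following three conditions: (1) I_j = [i, i+1] with both i, i+1 ∈ S ∩ S', and g swaps i and i+1; (2) I_j = [a,b] with S ∩ I_j = [a, b−1], S' ∩ I_j = [a+1, b], and g(i) = i+1 for every i ∈ S ∩ I_j; (3) I_j = [a,b] with S' ∩ I_j = [a, b−1], S ∩ I_j = [a+1, b], and g(i) = i−1 for every i ∈ S ∩ I_j. -/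

import Mathlib

namespace Stmt2

def R (S : Finset ℤ) (g : ℤ → ℤ) : Finset ℤ :=
  S.filter fun i => g i = i + 1 ∧ ¬(i + 1 ∈ S ∧ g (i + 1) = i)

def L (S : Finset ℤ) (g : ℤ → ℤ) : Finset ℤ :=
  S.filter fun i => g i = i - 1 ∧ ¬(i - 1 ∈ S ∧ g (i - 1) = i)

def W (S : Finset ℤ) (g : ℤ → ℤ) : Finset ℤ :=
  S.filter fun i => g i = i + 1 ∧ i + 1 ∈ S ∧ g (i + 1) = i

noncomputable def endR (S : Finset ℤ) (k a : ℤ) : ℤ :=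
  WithTop.untopD (k + 1) (((Finset.Icc (a + 1) (k + 1)).filter fun b => b ∉ S).min)

noncomputable def startL (S : Finset ℤ) (d : ℤ) : ℤ :=
  WithBot.unbotD (-1) (((Finset.Icc (-1) (d - 1)).filter fun c => c ∉ S).max)

noncomputable def Intervals (S : Finset ℤ) (g : ℤ → ℤ) (k : ℤ) : Finset (ℤ × ℤ) :=
  ((W S g).image fun i => (i, i + 1)) ∪
  (((R S g).filter fun a => a - 1 ∉ R S g).image fun a => (a, endR S k a)) ∪
  (((L S g).filter fun d => d + 1 ∉ L S g).image fun d => (startL S d, d))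

variable {k : ℤ} {S S' : Finset ℤ} {g : ℤ → ℤ}

lemma mem_R {i : ℤ} :
    i ∈ R S g ↔ i ∈ S ∧ (g i = i + 1 ∧ ¬(i + 1 ∈ S ∧ g (i + 1) = i)) :=
  Finset.mem_filter

lemma mem_L {i : ℤ} :
    i ∈ L S g ↔ i ∈ S ∧ (g i = i - 1 ∧ ¬(i - 1 ∈ S ∧ g (i - 1) = i)) :=
  Finset.mem_filter

lemma mem_W {i : ℤ} :
    i ∈ W S g ↔ i ∈ S ∧ (g i = i + 1 ∧ i + 1 ∈ S ∧ g (i + 1) = i) :=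
  Finset.mem_filter

lemma R_subset : R S g ⊆ S := Finset.filter_subset _ _
lemma L_subset : L S g ⊆ S := Finset.filter_subset _ _
lemma W_subset : W S g ⊆ S := Finset.filter_subset _ _

lemma endR_spec (hS : S ⊆ Finset.Icc 0 k) {a : ℤ} (ha : a ≤ k) :
    endR S k a ∉ S ∧ a < endR S k a ∧ endR S k a ≤ k + 1 ∧
      ∀ x, a < x → x < endR S k a → x ∈ S := by
  classical
  set F := (Finset.Icc (a + 1) (k + 1)).filter (fun b => b ∉ S) with hF
  have hk1 : (k + 1) ∉ S := by
    intro h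
    have := hS h
    simp only [Finset.mem_Icc] at this
    omega
  have hne : F.Nonempty := by
    refine ⟨k + 1, ?_⟩
    simp only [hF, Finset.mem_filter, Finset.mem_Icc]
    exact ⟨⟨by omega, le_refl _⟩, hk1⟩
  obtain ⟨m, hm⟩ := Finset.min_of_nonempty hne
  have hmem : m ∈ F := Finset.mem_of_min hm
  have he : endR S k a = m := by
    show WithTop.untopD (k + 1) (F.min) = m
    rw [hm]; rfl
  simp only [hF, Finset.mem_filter, Finset.mem_Icc] at hmem
  refine ⟨he ▸ hmem.2, by omega, by omega, ?_⟩
  intro x hx1 hx2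
  by_contra hxS
  have hxF : x ∈ F := by
    simp only [hF, Finset.mem_filter, Finset.mem_Icc]
    exact ⟨⟨by omega, by omega⟩, hxS⟩
  have := Finset.min_le hxF
  rw [hm] at this
  have : m ≤ x := WithTop.coe_le_coe.mp this
  omega

lemma startL_spec (hS : S ⊆ Finset.Icc 0 k) {d : ℤ} (hd : 0 ≤ d) :
    startL S d ∉ S ∧ startL S d < d ∧ -1 ≤ startL S d ∧
      ∀ x, startL S d < x → x < d → x ∈ S := by
  classical
  set F := (Finset.Icc (-1) (d - 1)).filter (fun c => c ∉ S) with hF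
  have hm1 : (-1 : ℤ) ∉ S := by
    intro h
    have := hS h
    simp only [Finset.mem_Icc] at this
    omega
  have hne : F.Nonempty := by
    refine ⟨-1, ?_⟩
    simp only [hF, Finset.mem_filter, Finset.mem_Icc]
    exact ⟨⟨le_refl _, by omega⟩, hm1⟩
  obtain ⟨m, hm⟩ := Finset.max_of_nonempty hne
  have hmem : m ∈ F := Finset.mem_of_max hm
  have he : startL S d = m := by
    show WithBot.unbotD (-1) (F.max) = m
    rw [hm]; rfl
  simp only [hF, Finset.mem_filter, Finset.mem_Icc] at hmem
  refine ⟨he ▸ hmem.2, by omega, by omega, ?_⟩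
  intro x hx1 hx2
  by_contra hxS
  have hxF : x ∈ F := by
    simp only [hF, Finset.mem_filter, Finset.mem_Icc]
    exact ⟨⟨by omega, by omega⟩, hxS⟩
  have := Finset.le_max hxF
  rw [hm] at this
  have : x ≤ m := WithBot.coe_le_coe.mp this
  omega

lemma R_closed (hinj : Set.InjOn g ↑S) {i : ℤ}
    (hdisp : ∀ i ∈ S, g i = i - 1 ∨ g i = i ∨ g i = i + 1)
    (hi : i ∈ R S g) (h1 : i + 1 ∈ S) : i + 1 ∈ R S g := by
  rw [mem_R] at hi ⊢
  obtain ⟨hiS, hgi, hno⟩ := hi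
  have hne1 : g (i + 1) ≠ i + 1 := by
    intro h
    have : i = i + 1 := hinj (Finset.mem_coe.mpr hiS) (Finset.mem_coe.mpr h1) (by rw [hgi, h])
    omega
  have hne0 : g (i + 1) ≠ i := fun h => hno ⟨h1, h⟩
  have hg1 : g (i + 1) = i + 1 + 1 := by
    rcases hdisp (i + 1) h1 with h | h | h
    · exact absurd (h.trans (by ring)) hne0
    · exact absurd h hne1
    · exact h
  refine ⟨h1, hg1, ?_⟩
  rintro ⟨h2S, h2⟩
  have : i = i + 1 + 1 := hinj (Finset.mem_coe.mpr hiS) (Finset.mem_coe.mpr h2S) (by rw [hgi, h2])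
  omega

lemma L_closed (hinj : Set.InjOn g ↑S) {i : ℤ}
    (hdisp : ∀ i ∈ S, g i = i - 1 ∨ g i = i ∨ g i = i + 1)
    (hi : i ∈ L S g) (h1 : i - 1 ∈ S) : i - 1 ∈ L S g := by
  rw [mem_L] at hi ⊢
  obtain ⟨hiS, hgi, hno⟩ := hi
  have hne1 : g (i - 1) ≠ i - 1 := by
    intro h
    have : i = i - 1 := hinj (Finset.mem_coe.mpr hiS) (Finset.mem_coe.mpr h1) (by rw [hgi, h])
    omega
  have hne0 : g (i - 1) ≠ i := fun h => hno ⟨h1, h⟩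
  have hg1 : g (i - 1) = i - 1 - 1 := by
    rcases hdisp (i - 1) h1 with h | h | h
    · exact h
    · exact absurd h hne1
    · exact absurd (h.trans (by ring)) hne0
  refine ⟨h1, hg1, ?_⟩
  rintro ⟨h2S, h2⟩
  have : i = i - 1 - 1 := hinj (Finset.mem_coe.mpr hiS) (Finset.mem_coe.mpr h2S) (by rw [hgi, h2])
  omega

lemma runR (hS : S ⊆ Finset.Icc 0 k) (hinj : Set.InjOn g ↑S)
    (hdisp : ∀ i ∈ S, g i = i - 1 ∨ g i = i ∨ g i = i + 1)
    {a : ℤ} (ha : a ∈ R S g) :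
    ∀ x, a ≤ x → x < endR S k a → x ∈ R S g := by
  have hak : a ≤ k := by
    have := hS (R_subset ha)
    simp only [Finset.mem_Icc] at this
    omega
  obtain ⟨h1, h2, h3, h4⟩ := endR_spec hS hak
  refine Int.le_induction (fun _ => ha) ?_
  intro n hn ih hlt
  have hnR : n ∈ R S g := ih (by omega)
  have hnS : n + 1 ∈ S := h4 (n + 1) (by omega) hlt
  exact R_closed hinj hdisp hnR hnS

lemma runL (hS : S ⊆ Finset.Icc 0 k) (hinj : Set.InjOn g ↑S)
    (hdisp : ∀ i ∈ S, g i = i - 1 ∨ g i = i ∨ g i = i + 1)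
    {d : ℤ} (hd : d ∈ L S g) :
    ∀ x, x ≤ d → startL S d < x → x ∈ L S g := by
  have hd0 : 0 ≤ d := by
    have := hS (L_subset hd)
    simp only [Finset.mem_Icc] at this
    omega
  obtain ⟨h1, h2, h3, h4⟩ := startL_spec hS hd0
  refine Int.le_induction_down (fun _ => hd) ?_
  intro n hn ih hlt
  have hnL : n ∈ L S g := ih (by omega)
  have hnS : n - 1 ∈ S := h4 (n - 1) hlt (by omega)
  exact L_closed hinj hdisp hnL hnS

lemma exists_startR (hS : S ⊆ Finset.Icc 0 k) {i : ℤ} (hi : i ∈ R S g) :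
    ∃ a, a ∈ R S g ∧ a - 1 ∉ R S g ∧ a ≤ i ∧ i < endR S k a := by
  classical
  have hi0 : 0 ≤ i ∧ i ≤ k := by
    have := hS (R_subset hi)
    simpa only [Finset.mem_Icc] using this
  set T := (Finset.Icc 0 i).filter (fun a => Finset.Icc a i ⊆ R S g) with hT
  have hiT : i ∈ T := by
    simp only [hT, Finset.mem_filter, Finset.mem_Icc]
    refine ⟨⟨hi0.1, le_refl _⟩, ?_⟩
    intro x hx
    simp only [Finset.mem_Icc] at hx
    have : x = i := by omega
    rwa [this]
  have hne : T.Nonempty := ⟨i, hiT⟩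
  set a := T.min' hne with haa
  have haT : a ∈ T := T.min'_mem hne
  simp only [hT, Finset.mem_filter, Finset.mem_Icc] at haT
  obtain ⟨⟨ha0, hai⟩, hsub⟩ := haT
  have haR : a ∈ R S g := hsub (by simp only [Finset.mem_Icc]; omega)
  have hak : a ≤ k := by
    have := hS (R_subset haR)
    simp only [Finset.mem_Icc] at this
    omega
  have hstart : a - 1 ∉ R S g := by
    intro h
    have h0 : 0 ≤ a - 1 := by
      have := hS (R_subset h)
      simp only [Finset.mem_Icc] at this
      omega
    have hmT : a - 1 ∈ T := by
      simp only [hT, Finset.mem_filter, Finset.mem_Icc]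
      refine ⟨⟨h0, by omega⟩, ?_⟩
      intro x hx
      simp only [Finset.mem_Icc] at hx
      rcases eq_or_lt_of_le hx.1 with heq | hlt
      · rwa [← heq]
      · exact hsub (by simp only [Finset.mem_Icc]; omega)
    have := T.min'_le _ hmT
    omega
  refine ⟨a, haR, hstart, hai, ?_⟩
  by_contra hle
  push_neg at hle
  obtain ⟨he1, he2, he3, he4⟩ := endR_spec hS hak
  have : endR S k a ∈ R S g := hsub (by simp only [Finset.mem_Icc]; omega)
  exact he1 (R_subset this)

lemma exists_endL (hS : S ⊆ Finset.Icc 0 k) {i : ℤ} (hi : i ∈ L S g) :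
    ∃ d, d ∈ L S g ∧ d + 1 ∉ L S g ∧ startL S d < i ∧ i ≤ d := by
  classical
  have hi0 : 0 ≤ i ∧ i ≤ k := by
    have := hS (L_subset hi)
    simpa only [Finset.mem_Icc] using this
  set T := (Finset.Icc i k).filter (fun d => Finset.Icc i d ⊆ L S g) with hT
  have hiT : i ∈ T := by
    simp only [hT, Finset.mem_filter, Finset.mem_Icc]
    refine ⟨⟨le_refl _, hi0.2⟩, ?_⟩
    intro x hx
    simp only [Finset.mem_Icc] at hx
    have : x = i := by omega
    rwa [this]
  have hne : T.Nonempty := ⟨i, hiT⟩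
  set d := T.max' hne with hdd
  have hdT : d ∈ T := T.max'_mem hne
  simp only [hT, Finset.mem_filter, Finset.mem_Icc] at hdT
  obtain ⟨⟨hdi, hdk⟩, hsub⟩ := hdT
  have hdL : d ∈ L S g := hsub (by simp only [Finset.mem_Icc]; omega)
  have hd0 : 0 ≤ d := by
    have := hS (L_subset hdL)
    simp only [Finset.mem_Icc] at this
    omega
  have hend : d + 1 ∉ L S g := by
    intro h
    have hk1 : d + 1 ≤ k := by
      have := hS (L_subset h)
      simp only [Finset.mem_Icc] at this
      omega
    have hmT : d + 1 ∈ T := by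
      simp only [hT, Finset.mem_filter, Finset.mem_Icc]
      refine ⟨⟨by omega, hk1⟩, ?_⟩
      intro x hx
      simp only [Finset.mem_Icc] at hx
      rcases eq_or_lt_of_le hx.2 with heq | hlt
      · rwa [heq]
      · exact hsub (by simp only [Finset.mem_Icc]; omega)
    have := T.le_max' _ hmT
    omega
  refine ⟨d, hdL, hend, ?_, hdi⟩
  by_contra hle
  push_neg at hle
  obtain ⟨he1, he2, he3, he4⟩ := startL_spec hS hd0
  have : startL S d ∈ L S g := hsub (by simp only [Finset.mem_Icc]; omega)
  exact he1 (L_subset this)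

lemma startR_not_mem_S' (hsurj : Set.SurjOn g ↑S ↑S')
    (hdisp : ∀ i ∈ S, g i = i - 1 ∨ g i = i ∨ g i = i + 1)
    {a : ℤ} (ha : a ∈ R S g) (hst : a - 1 ∉ R S g) : a ∉ S' := by
  intro haS'
  obtain ⟨j, hjS, hgj⟩ := hsurj (Finset.mem_coe.mpr haS')
  have hjS : j ∈ S := Finset.mem_coe.mp hjS
  rw [mem_R] at ha
  rcases hdisp j hjS with h | h | h
  · -- g j = j - 1 = a, so j = a + 1
    have hj : j = a + 1 := by rw [h] at hgj; omega
    subst hj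
    exact ha.2.2 ⟨hjS, hgj⟩
  · -- g j = j = a
    have hj : j = a := by rw [h] at hgj; omega
    subst hj
    rw [ha.2.1] at hgj
    omega
  · -- g j = j + 1 = a, so j = a - 1 and a - 1 ∈ R
    have hj : j = a - 1 := by rw [h] at hgj; omega
    subst hj
    apply hst
    rw [mem_R]
    refine ⟨hjS, by omega, ?_⟩
    rintro ⟨hx, hgx⟩
    have : a - 1 + 1 = a := by omega
    rw [this] at hgx
    rw [ha.2.1] at hgx
    omega

lemma endL_not_mem_S' (hsurj : Set.SurjOn g ↑S ↑S')
    (hdisp : ∀ i ∈ S, g i = i - 1 ∨ g i = i ∨ g i = i + 1)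
    {d : ℤ} (hd : d ∈ L S g) (hend : d + 1 ∉ L S g) : d ∉ S' := by
  intro hdS'
  obtain ⟨j, hjS, hgj⟩ := hsurj (Finset.mem_coe.mpr hdS')
  have hjS : j ∈ S := Finset.mem_coe.mp hjS
  rw [mem_L] at hd
  rcases hdisp j hjS with h | h | h
  · -- g j = j - 1 = d, so j = d + 1 and d + 1 ∈ L
    have hj : j = d + 1 := by rw [h] at hgj; omega
    subst hj
    apply hend
    rw [mem_L]
    refine ⟨hjS, by omega, ?_⟩
    rintro ⟨hx, hgx⟩
    have : d + 1 - 1 = d := by omega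
    rw [this] at hgx
    rw [hd.2.1] at hgx
    omega
  · -- g j = j = d
    have hj : j = d := by rw [h] at hgj; omega
    subst hj
    rw [hd.2.1] at hgj
    omega
  · -- g j = j + 1 = d, so j = d - 1
    have hj : j = d - 1 := by rw [h] at hgj; omega
    subst hj
    exact hd.2.2 ⟨hjS, hgj⟩

-- membership in a right interval and in S forces membership in R
lemma mem_right_S (hS : S ⊆ Finset.Icc 0 k) (hinj : Set.InjOn g ↑S)
    (hdisp : ∀ i ∈ S, g i = i - 1 ∨ g i = i ∨ g i = i + 1)
    {a x : ℤ} (ha : a ∈ R S g) (hx : x ∈ Finset.Icc a (endR S k a)) (hxS : x ∈ S) :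
    x ∈ R S g := by
  have hak : a ≤ k := by
    have := hS (R_subset ha); simp only [Finset.mem_Icc] at this; omega
  obtain ⟨h1, h2, h3, h4⟩ := endR_spec hS hak
  simp only [Finset.mem_Icc] at hx
  have : x ≠ endR S k a := fun h => h1 (h ▸ hxS)
  exact runR hS hinj hdisp ha x hx.1 (by omega)

lemma mem_left_S (hS : S ⊆ Finset.Icc 0 k) (hinj : Set.InjOn g ↑S)
    (hdisp : ∀ i ∈ S, g i = i - 1 ∨ g i = i ∨ g i = i + 1)
    {d x : ℤ} (hd : d ∈ L S g) (hx : x ∈ Finset.Icc (startL S d) d) (hxS : x ∈ S) :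
    x ∈ L S g := by
  have hd0 : 0 ≤ d := by
    have := hS (L_subset hd); simp only [Finset.mem_Icc] at this; omega
  obtain ⟨h1, h2, h3, h4⟩ := startL_spec hS hd0
  simp only [Finset.mem_Icc] at hx
  have : x ≠ startL S d := fun h => h1 (h ▸ hxS)
  exact runL hS hinj hdisp hd x hx.2 (by omega)

lemma not_R_and_L {i : ℤ} (hR : i ∈ R S g) (hL : i ∈ L S g) : False := by
  rw [mem_R] at hR; rw [mem_L] at hL
  have h1 := hR.2.1
  have h2 := hL.2.1
  rw [h1] at h2
  omega

lemma W_props (hinj : Set.InjOn g ↑S) {i : ℤ} (hi : i ∈ W S g) :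
    i ∉ R S g ∧ i + 1 ∉ R S g ∧ i ∉ L S g ∧ i + 1 ∉ L S g := by
  rw [mem_W] at hi
  obtain ⟨hiS, hg1, h1S, hg2⟩ := hi
  refine ⟨?_, ?_, ?_, ?_⟩
  · intro h; exact (mem_R.mp h).2.2 ⟨h1S, hg2⟩
  · intro h
    have := (mem_R.mp h).2.1
    rw [hg2] at this
    omega
  · intro h
    have := (mem_L.mp h).2.1
    rw [hg1] at this
    omega
  · intro h
    apply (mem_L.mp h).2.2
    have : i + 1 - 1 = i := by omega
    rw [this]
    exact ⟨hiS, hg1⟩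

lemma right_S_inter (hS : S ⊆ Finset.Icc 0 k) (hinj : Set.InjOn g ↑S)
    (hdisp : ∀ i ∈ S, g i = i - 1 ∨ g i = i ∨ g i = i + 1)
    {a : ℤ} (ha : a ∈ R S g) :
    S ∩ Finset.Icc a (endR S k a) = Finset.Icc a (endR S k a - 1) := by
  have hak : a ≤ k := by
    have := hS (R_subset ha); simp only [Finset.mem_Icc] at this; omega
  obtain ⟨h1, h2, h3, h4⟩ := endR_spec hS hak
  ext x
  simp only [Finset.mem_inter, Finset.mem_Icc]
  constructor
  · rintro ⟨hxS, hxa, hxb⟩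
    have : x ≠ endR S k a := fun h => h1 (h ▸ hxS)
    omega
  · rintro ⟨hxa, hxb⟩
    have hxR : x ∈ R S g := runR hS hinj hdisp ha x hxa (by omega)
    exact ⟨R_subset hxR, hxa, by omega⟩

lemma right_S'_inter (hS : S ⊆ Finset.Icc 0 k) (hinj : Set.InjOn g ↑S)
    (hmap : Set.MapsTo g ↑S ↑S') (hsurj : Set.SurjOn g ↑S ↑S')
    (hdisp : ∀ i ∈ S, g i = i - 1 ∨ g i = i ∨ g i = i + 1)
    {a : ℤ} (ha : a ∈ R S g) (hst : a - 1 ∉ R S g) :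
    S' ∩ Finset.Icc a (endR S k a) = Finset.Icc (a + 1) (endR S k a) := by
  have hak : a ≤ k := by
    have := hS (R_subset ha); simp only [Finset.mem_Icc] at this; omega
  obtain ⟨h1, h2, h3, h4⟩ := endR_spec hS hak
  ext x
  simp only [Finset.mem_inter, Finset.mem_Icc]
  constructor
  · rintro ⟨hxS', hxa, hxb⟩
    have : x ≠ a := by
      intro h
      exact startR_not_mem_S' hsurj hdisp ha hst (h ▸ hxS')
    omega
  · rintro ⟨hxa, hxb⟩
    have hx1R : x - 1 ∈ R S g := runR hS hinj hdisp ha (x - 1) (by omega) (by omega)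
    have hgx : g (x - 1) = x := by
      have := (mem_R.mp hx1R).2.1
      rw [this]; ring
    have : g (x - 1) ∈ S' :=
      Finset.mem_coe.mp (hmap (Finset.mem_coe.mpr (R_subset hx1R)))
    rw [hgx] at this
    exact ⟨this, by omega, hxb⟩

lemma left_S_inter (hS : S ⊆ Finset.Icc 0 k) (hinj : Set.InjOn g ↑S)
    (hdisp : ∀ i ∈ S, g i = i - 1 ∨ g i = i ∨ g i = i + 1)
    {d : ℤ} (hd : d ∈ L S g) :
    S ∩ Finset.Icc (startL S d) d = Finset.Icc (startL S d + 1) d := by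
  have hd0 : 0 ≤ d := by
    have := hS (L_subset hd); simp only [Finset.mem_Icc] at this; omega
  obtain ⟨h1, h2, h3, h4⟩ := startL_spec hS hd0
  ext x
  simp only [Finset.mem_inter, Finset.mem_Icc]
  constructor
  · rintro ⟨hxS, hxa, hxb⟩
    have : x ≠ startL S d := fun h => h1 (h ▸ hxS)
    omega
  · rintro ⟨hxa, hxb⟩
    have hxL : x ∈ L S g := runL hS hinj hdisp hd x hxb (by omega)
    exact ⟨L_subset hxL, by omega, hxb⟩

lemma left_S'_inter (hS : S ⊆ Finset.Icc 0 k) (hinj : Set.InjOn g ↑S)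
    (hmap : Set.MapsTo g ↑S ↑S') (hsurj : Set.SurjOn g ↑S ↑S')
    (hdisp : ∀ i ∈ S, g i = i - 1 ∨ g i = i ∨ g i = i + 1)
    {d : ℤ} (hd : d ∈ L S g) (hend : d + 1 ∉ L S g) :
    S' ∩ Finset.Icc (startL S d) d = Finset.Icc (startL S d) (d - 1) := by
  have hd0 : 0 ≤ d := by
    have := hS (L_subset hd); simp only [Finset.mem_Icc] at this; omega
  obtain ⟨h1, h2, h3, h4⟩ := startL_spec hS hd0
  ext x
  simp only [Finset.mem_inter, Finset.mem_Icc]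
  constructor
  · rintro ⟨hxS', hxa, hxb⟩
    have : x ≠ d := by
      intro h
      exact endL_not_mem_S' hsurj hdisp hd hend (h ▸ hxS')
    omega
  · rintro ⟨hxa, hxb⟩
    have hx1L : x + 1 ∈ L S g := runL hS hinj hdisp hd (x + 1) (by omega) (by omega)
    have hgx : g (x + 1) = x := by
      have := (mem_L.mp hx1L).2.1
      rw [this]; ring
    have : g (x + 1) ∈ S' :=
      Finset.mem_coe.mp (hmap (Finset.mem_coe.mpr (L_subset hx1L)))
    rw [hgx] at this
    exact ⟨this, hxa, by omega⟩

lemma endR_mem_S' (hS : S ⊆ Finset.Icc 0 k) (hinj : Set.InjOn g ↑S)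
    (hmap : Set.MapsTo g ↑S ↑S')
    (hdisp : ∀ i ∈ S, g i = i - 1 ∨ g i = i ∨ g i = i + 1)
    {a : ℤ} (ha : a ∈ R S g) : endR S k a ∈ S' := by
  have hak : a ≤ k := by
    have := hS (R_subset ha); simp only [Finset.mem_Icc] at this; omega
  obtain ⟨h1, h2, h3, h4⟩ := endR_spec hS hak
  have hx1R : endR S k a - 1 ∈ R S g :=
    runR hS hinj hdisp ha (endR S k a - 1) (by omega) (by omega)
  have hgx : g (endR S k a - 1) = endR S k a := by
    have := (mem_R.mp hx1R).2.1
    rw [this]; ring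
  have := Finset.mem_coe.mp (hmap (Finset.mem_coe.mpr (R_subset hx1R)))
  rwa [hgx] at this

lemma startL_mem_S' (hS : S ⊆ Finset.Icc 0 k) (hinj : Set.InjOn g ↑S)
    (hmap : Set.MapsTo g ↑S ↑S')
    (hdisp : ∀ i ∈ S, g i = i - 1 ∨ g i = i ∨ g i = i + 1)
    {d : ℤ} (hd : d ∈ L S g) : startL S d ∈ S' := by
  have hd0 : 0 ≤ d := by
    have := hS (L_subset hd); simp only [Finset.mem_Icc] at this; omega
  obtain ⟨h1, h2, h3, h4⟩ := startL_spec hS hd0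
  have hx1L : startL S d + 1 ∈ L S g :=
    runL hS hinj hdisp hd (startL S d + 1) (by omega) (by omega)
  have hgx : g (startL S d + 1) = startL S d := by
    have := (mem_L.mp hx1L).2.1
    rw [this]; ring
  have := Finset.mem_coe.mp (hmap (Finset.mem_coe.mpr (L_subset hx1L)))
  rwa [hgx] at this

lemma disj_WW (hinj : Set.InjOn g ↑S) {i j : ℤ} (hi : i ∈ W S g) (hj : j ∈ W S g)
    (hij : i ≠ j) : Disjoint (Finset.Icc i (i + 1)) (Finset.Icc j (j + 1)) := by
  by_contra h
  obtain ⟨x, hx1, hx2⟩ := Finset.not_disjoint_iff.mp h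
  simp only [Finset.mem_Icc] at hx1 hx2
  have : j = i + 1 ∨ i = j + 1 := by omega
  rw [mem_W] at hi hj
  rcases this with h | h
  · subst h
    have h1 := hi.2.2.2   -- g (i+1) = i
    have h2 := hj.2.1     -- g (i+1) = i + 1 + 1
    rw [h1] at h2; omega
  · subst h
    have h1 := hj.2.2.2   -- g (j+1) = j, i.e. g i = j = i - 1
    have h2 := hi.2.1     -- g i = i + 1
    rw [h1] at h2; omega

lemma disj_WR (hS : S ⊆ Finset.Icc 0 k) (hinj : Set.InjOn g ↑S)
    (hdisp : ∀ i ∈ S, g i = i - 1 ∨ g i = i ∨ g i = i + 1)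
    {i a : ℤ} (hi : i ∈ W S g) (ha : a ∈ R S g) :
    Disjoint (Finset.Icc i (i + 1)) (Finset.Icc a (endR S k a)) := by
  by_contra h
  obtain ⟨x, hx1, hx2⟩ := Finset.not_disjoint_iff.mp h
  obtain ⟨hiR, hi1R, _, _⟩ := W_props hinj hi
  simp only [Finset.mem_Icc] at hx1
  have hx : x = i ∨ x = i + 1 := by omega
  have hW := mem_W.mp hi
  rcases hx with rfl | rfl
  · exact hiR (mem_right_S hS hinj hdisp ha hx2 hW.1)
  · exact hi1R (mem_right_S hS hinj hdisp ha hx2 hW.2.2.1)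

lemma disj_WL (hS : S ⊆ Finset.Icc 0 k) (hinj : Set.InjOn g ↑S)
    (hdisp : ∀ i ∈ S, g i = i - 1 ∨ g i = i ∨ g i = i + 1)
    {i d : ℤ} (hi : i ∈ W S g) (hd : d ∈ L S g) :
    Disjoint (Finset.Icc i (i + 1)) (Finset.Icc (startL S d) d) := by
  by_contra h
  obtain ⟨x, hx1, hx2⟩ := Finset.not_disjoint_iff.mp h
  obtain ⟨_, _, hiL, hi1L⟩ := W_props hinj hi
  simp only [Finset.mem_Icc] at hx1
  have hx : x = i ∨ x = i + 1 := by omega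
  have hW := mem_W.mp hi
  rcases hx with rfl | rfl
  · exact hiL (mem_left_S hS hinj hdisp hd hx2 hW.1)
  · exact hi1L (mem_left_S hS hinj hdisp hd hx2 hW.2.2.1)

lemma disj_RR' (hS : S ⊆ Finset.Icc 0 k) (hinj : Set.InjOn g ↑S)
    (hdisp : ∀ i ∈ S, g i = i - 1 ∨ g i = i ∨ g i = i + 1)
    {a a' : ℤ} (ha : a ∈ R S g) (ha' : a' ∈ R S g) (hst' : a' - 1 ∉ R S g)
    (hlt : a < a') :
    Disjoint (Finset.Icc a (endR S k a)) (Finset.Icc a' (endR S k a')) := by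
  have hba : endR S k a < a' := by
    by_contra hle
    push_neg at hle
    exact hst' (runR hS hinj hdisp ha (a' - 1) (by omega) (by omega))
  rw [Finset.disjoint_left]
  intro x hx1 hx2
  simp only [Finset.mem_Icc] at hx1 hx2
  omega

lemma disj_LL' (hS : S ⊆ Finset.Icc 0 k) (hinj : Set.InjOn g ↑S)
    (hdisp : ∀ i ∈ S, g i = i - 1 ∨ g i = i ∨ g i = i + 1)
    {d d' : ℤ} (hd : d ∈ L S g) (hend : d + 1 ∉ L S g) (hd' : d' ∈ L S g)
    (hlt : d < d') :
    Disjoint (Finset.Icc (startL S d) d) (Finset.Icc (startL S d') d') := by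
  have hba : d < startL S d' := by
    by_contra hle
    push_neg at hle
    exact hend (runL hS hinj hdisp hd' (d + 1) (by omega) (by omega))
  rw [Finset.disjoint_left]
  intro x hx1 hx2
  simp only [Finset.mem_Icc] at hx1 hx2
  omega

lemma disj_RL (hS : S ⊆ Finset.Icc 0 k) (hinj : Set.InjOn g ↑S)
    (hdisp : ∀ i ∈ S, g i = i - 1 ∨ g i = i ∨ g i = i + 1)
    {a d : ℤ} (ha : a ∈ R S g) (hd : d ∈ L S g) :
    Disjoint (Finset.Icc a (endR S k a)) (Finset.Icc (startL S d) d) := by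
  by_contra h
  obtain ⟨x, hx1, hx2⟩ := Finset.not_disjoint_iff.mp h
  by_cases hxS : x ∈ S
  · exact not_R_and_L (mem_right_S hS hinj hdisp ha hx1 hxS)
      (mem_left_S hS hinj hdisp hd hx2 hxS)
  · have hak : a ≤ k := by
      have := hS (R_subset ha); simp only [Finset.mem_Icc] at this; omega
    have hd0 : 0 ≤ d := by
      have := hS (L_subset hd); simp only [Finset.mem_Icc] at this; omega
    obtain ⟨hr1, hr2, hr3, hr4⟩ := endR_spec hS hak
    obtain ⟨hl1, hl2, hl3, hl4⟩ := startL_spec hS hd0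
    simp only [Finset.mem_Icc] at hx1 hx2
    -- x ∉ S forces x = endR S k a and x = startL S d
    have hxb : x = endR S k a := by
      by_contra hne
      exact hxS (R_subset (runR hS hinj hdisp ha x hx1.1 (by omega)))
    have hxc : x = startL S d := by
      by_contra hne
      exact hxS (L_subset (runL hS hinj hdisp hd x hx2.2 (by omega)))
    -- b = c : contradiction via injectivity
    have hbR : endR S k a - 1 ∈ R S g :=
      runR hS hinj hdisp ha (endR S k a - 1) (by omega) (by omega)
    have hcL : startL S d + 1 ∈ L S g :=
      runL hS hinj hdisp hd (startL S d + 1) (by omega) (by omega)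
    have hg1 : g (endR S k a - 1) = endR S k a := by
      have := (mem_R.mp hbR).2.1; rw [this]; ring
    have hg2 : g (startL S d + 1) = startL S d := by
      have := (mem_L.mp hcL).2.1; rw [this]; ring
    have heq : g (endR S k a - 1) = g (startL S d + 1) := by
      rw [hg1, hg2, hxb.symm.trans hxc]
    have := hinj (Finset.mem_coe.mpr (R_subset hbR))
      (Finset.mem_coe.mpr (L_subset hcL)) heq
    omega

lemma mem_Intervals {p : ℤ × ℤ} :
    p ∈ Intervals S g k ↔
      (∃ i ∈ W S g, p = (i, i + 1)) ∨
      (∃ a ∈ R S g, a - 1 ∉ R S g ∧ p = (a, endR S k a)) ∨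
      (∃ d ∈ L S g, d + 1 ∉ L S g ∧ p = (startL S d, d)) := by
  simp only [Intervals, Finset.mem_union, Finset.mem_image, Finset.mem_filter]
  constructor
  · rintro ((⟨i, hi, rfl⟩ | ⟨a, ⟨haR, hst⟩, rfl⟩) | ⟨d, ⟨hdL, hend⟩, rfl⟩)
    · exact Or.inl ⟨i, hi, rfl⟩
    · exact Or.inr (Or.inl ⟨a, haR, hst, rfl⟩)
    · exact Or.inr (Or.inr ⟨d, hdL, hend, rfl⟩)
  · rintro (⟨i, hi, rfl⟩ | ⟨a, haR, hst, rfl⟩ | ⟨d, hdL, hend, rfl⟩)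
    · exact Or.inl (Or.inl ⟨i, hi, rfl⟩)
    · exact Or.inl (Or.inr ⟨a, ⟨haR, hst⟩, rfl⟩)
    · exact Or.inr ⟨d, ⟨hdL, hend⟩, rfl⟩

lemma W_mem_Intervals {i : ℤ} (hi : i ∈ W S g) : (i, i + 1) ∈ Intervals S g k :=
  mem_Intervals.mpr (Or.inl ⟨i, hi, rfl⟩)

lemma R_mem_Intervals {a : ℤ} (ha : a ∈ R S g) (hst : a - 1 ∉ R S g) :
    (a, endR S k a) ∈ Intervals S g k :=
  mem_Intervals.mpr (Or.inr (Or.inl ⟨a, ha, hst, rfl⟩))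

lemma L_mem_Intervals {d : ℤ} (hd : d ∈ L S g) (hend : d + 1 ∉ L S g) :
    (startL S d, d) ∈ Intervals S g k :=
  mem_Intervals.mpr (Or.inr (Or.inr ⟨d, hd, hend, rfl⟩))

lemma cover (hS : S ⊆ Finset.Icc 0 k)
    (hdisp : ∀ i ∈ S, g i = i - 1 ∨ g i = i ∨ g i = i + 1)
    {i : ℤ} (hi : i ∈ S) (hne : g i ≠ i) :
    ∃ p ∈ Intervals S g k, i ∈ Finset.Icc p.1 p.2 ∧ g i ∈ Finset.Icc p.1 p.2 := by
  classical
  rcases hdisp i hi with h | h | h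
  · -- g i = i - 1
    by_cases hsw : i - 1 ∈ S ∧ g (i - 1) = i
    · have hW : i - 1 ∈ W S g := by
        rw [mem_W]
        refine ⟨hsw.1, by rw [hsw.2]; ring, ?_, ?_⟩
        · rw [show i - 1 + 1 = i by ring]; exact hi
        · rw [show i - 1 + 1 = i by ring]; rw [h]
      exact ⟨(i - 1, i - 1 + 1), W_mem_Intervals hW,
        by simp only [Finset.mem_Icc]; omega,
        by simp only [Finset.mem_Icc]; rw [h]; constructor <;> omega⟩
    · have hL : i ∈ L S g := mem_L.mpr ⟨hi, h, hsw⟩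
      obtain ⟨d, hdL, hend, hlt, hle⟩ := exists_endL hS hL
      exact ⟨(startL S d, d), L_mem_Intervals hdL hend,
        by simp only [Finset.mem_Icc]; omega,
        by simp only [Finset.mem_Icc]; rw [h]; constructor <;> omega⟩
  · exact absurd h hne
  · -- g i = i + 1
    by_cases hsw : i + 1 ∈ S ∧ g (i + 1) = i
    · have hW : i ∈ W S g := mem_W.mpr ⟨hi, h, hsw.1, hsw.2⟩
      exact ⟨(i, i + 1), W_mem_Intervals hW,
        by simp only [Finset.mem_Icc]; omega,
        by simp only [Finset.mem_Icc]; rw [h]; constructor <;> omega⟩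
    · have hR : i ∈ R S g := mem_R.mpr ⟨hi, h, hsw⟩
      obtain ⟨a, haR, hst, hle, hlt⟩ := exists_startR hS hR
      exact ⟨(a, endR S k a), R_mem_Intervals haR hst,
        by simp only [Finset.mem_Icc]; omega,
        by simp only [Finset.mem_Icc]; rw [h]; constructor <;> omega⟩

end Stmt2

open Stmt2 in
/-- **Proposition (decomposition of displacement ≤ 1 bijections into intervals).**
Let `S, S' ⊆ [0,k]` be size-`n` subsets and `g : S → S'` a bijection with
`g i ∈ {i-1, i, i+1}` for all `i ∈ S`.  Then there is a collection of pairwise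
disjoint subintervals `I₁, …, I_r ⊆ [0,k]` (encoded by their endpoint pairs) such that
`S` and `S'` agree outside the union of the intervals, `g` fixes every element of `S`
outside this union, and each interval is of one of the three types:
(1) a two-element interval `[i,i+1] ⊆ S ∩ S'` on which `g` swaps `i` and `i+1`;
(2) an interval `[a,b]` with `S ∩ [a,b] = [a,b-1]`, `S' ∩ [a,b] = [a+1,b]` and
`g(i) = i+1` there; (3) the mirror case with `g(i) = i-1`. -/
theorem stmt_2 (k : ℤ) (hk : 1 ≤ k) (n : ℕ) (S S' : Finset ℤ)
    (hS : S ⊆ Finset.Icc 0 k) (hS' : S' ⊆ Finset.Icc 0 k)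
    (hcardS : S.card = n) (hcardS' : S'.card = n)
    (g : ℤ → ℤ) (hbij : Set.BijOn g ↑S ↑S')
    (hdisp : ∀ i ∈ S, g i = i - 1 ∨ g i = i ∨ g i = i + 1) :
    ∃ 𝓘 : Finset (ℤ × ℤ),
      (∀ p ∈ 𝓘, 0 ≤ p.1 ∧ p.1 ≤ p.2 ∧ p.2 ≤ k) ∧
      (∀ p ∈ 𝓘, ∀ q ∈ 𝓘, p ≠ q →
        Disjoint (Finset.Icc p.1 p.2) (Finset.Icc q.1 q.2)) ∧
      (S \ 𝓘.biUnion (fun p => Finset.Icc p.1 p.2)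
        = S' \ 𝓘.biUnion (fun p => Finset.Icc p.1 p.2)) ∧
      (∀ i ∈ S \ 𝓘.biUnion (fun p => Finset.Icc p.1 p.2), g i = i) ∧
      (∀ p ∈ 𝓘,
        (p.2 = p.1 + 1 ∧ p.1 ∈ S ∩ S' ∧ p.2 ∈ S ∩ S' ∧
          g p.1 = p.2 ∧ g p.2 = p.1) ∨
        (S ∩ Finset.Icc p.1 p.2 = Finset.Icc p.1 (p.2 - 1) ∧
          S' ∩ Finset.Icc p.1 p.2 = Finset.Icc (p.1 + 1) p.2 ∧
          ∀ i ∈ S ∩ Finset.Icc p.1 p.2, g i = i + 1) ∨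
        (S' ∩ Finset.Icc p.1 p.2 = Finset.Icc p.1 (p.2 - 1) ∧
          S ∩ Finset.Icc p.1 p.2 = Finset.Icc (p.1 + 1) p.2 ∧
          ∀ i ∈ S ∩ Finset.Icc p.1 p.2, g i = i - 1)) := by
  classical
  have hinj : Set.InjOn g ↑S := hbij.injOn
  have hmap : Set.MapsTo g ↑S ↑S' := hbij.mapsTo
  have hsurj : Set.SurjOn g ↑S ↑S' := hbij.surjOn
  have hmap' : ∀ i ∈ S, g i ∈ S' := fun i hi =>
    Finset.mem_coe.mp (hmap (Finset.mem_coe.mpr hi))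
  refine ⟨Intervals S g k, ?_, ?_, ?_, ?_, ?_⟩
  · -- bounds
    intro p hp
    rcases mem_Intervals.mp hp with ⟨i, hi, rfl⟩ | ⟨a, haR, hst, rfl⟩ | ⟨d, hdL, hend, rfl⟩
    · have hW := mem_W.mp hi
      have h1 := hS hW.1
      have h2 := hS hW.2.2.1
      simp only [Finset.mem_Icc] at h1 h2
      exact ⟨h1.1, le_of_lt (lt_add_one i), h2.2⟩
    · have hak : a ≤ k := by
        have := hS (R_subset haR); simp only [Finset.mem_Icc] at this; omega
      have h0 : 0 ≤ a := by
        have := hS (R_subset haR); simp only [Finset.mem_Icc] at this; omega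
      obtain ⟨h1, h2, h3, h4⟩ := endR_spec hS hak
      have hbS' : endR S k a ∈ S' := endR_mem_S' hS hinj hmap hdisp haR
      have := hS' hbS'
      simp only [Finset.mem_Icc] at this
      exact ⟨h0, by omega, this.2⟩
    · have hd0 : 0 ≤ d := by
        have := hS (L_subset hdL); simp only [Finset.mem_Icc] at this; omega
      have hdk : d ≤ k := by
        have := hS (L_subset hdL); simp only [Finset.mem_Icc] at this; omega
      obtain ⟨h1, h2, h3, h4⟩ := startL_spec hS hd0
      have hcS' : startL S d ∈ S' := startL_mem_S' hS hinj hmap hdisp hdL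
      have := hS' hcS'
      simp only [Finset.mem_Icc] at this
      exact ⟨this.1, by omega, hdk⟩
  · -- pairwise disjoint
    intro p hp q hq hpq
    rcases mem_Intervals.mp hp with ⟨i, hi, rfl⟩ | ⟨a, haR, hst, rfl⟩ | ⟨d, hdL, hend, rfl⟩ <;>
      rcases mem_Intervals.mp hq with ⟨j, hj, rfl⟩ | ⟨a', haR', hst', rfl⟩ | ⟨d', hdL', hend', rfl⟩
    · have hij : i ≠ j := fun h => hpq (by rw [h])
      exact disj_WW hinj hi hj hij
    · exact disj_WR hS hinj hdisp hi haR'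
    · exact disj_WL hS hinj hdisp hi hdL'
    · exact (disj_WR hS hinj hdisp hj haR).symm
    · rcases lt_trichotomy a a' with h | h | h
      · exact disj_RR' hS hinj hdisp haR haR' hst' h
      · exact absurd (by rw [h]) hpq
      · exact (disj_RR' hS hinj hdisp haR' haR hst h).symm
    · exact disj_RL hS hinj hdisp haR hdL'
    · exact (disj_WL hS hinj hdisp hj hdL).symm
    · exact (disj_RL hS hinj hdisp haR' hdL).symm
    · rcases lt_trichotomy d d' with h | h | h
      · exact disj_LL' hS hinj hdisp hdL hend hdL' h
      · exact absurd (by rw [h]) hpq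
      · exact (disj_LL' hS hinj hdisp hdL' hend' hdL h).symm
  · -- S \ U = S' \ U
    ext x
    simp only [Finset.mem_sdiff]
    constructor
    · rintro ⟨hxS, hxU⟩
      have hgx : g x = x := by
        by_contra hne
        obtain ⟨p, hp, hmem, _⟩ := cover hS hdisp hxS hne
        exact hxU (Finset.mem_biUnion.mpr ⟨p, hp, hmem⟩)
      refine ⟨?_, hxU⟩
      have := hmap' x hxS
      rwa [hgx] at this
    · rintro ⟨hxS', hxU⟩
      obtain ⟨j, hjS, hgj⟩ := hsurj (Finset.mem_coe.mpr hxS')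
      have hjS : j ∈ S := Finset.mem_coe.mp hjS
      by_cases hgfix : g j = j
      · have : j = x := by rw [← hgj, hgfix]
        exact ⟨this ▸ hjS, hxU⟩
      · exfalso
        obtain ⟨p, hp, _, hmem⟩ := cover hS hdisp hjS hgfix
        rw [hgj] at hmem
        exact hxU (Finset.mem_biUnion.mpr ⟨p, hp, hmem⟩)
  · -- g fixes S outside U
    intro i hi
    rw [Finset.mem_sdiff] at hi
    by_contra hne
    obtain ⟨p, hp, hmem, _⟩ := cover hS hdisp hi.1 hne
    exact hi.2 (Finset.mem_biUnion.mpr ⟨p, hp, hmem⟩)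
  · -- types
    intro p hp
    rcases mem_Intervals.mp hp with ⟨i, hi, rfl⟩ | ⟨a, haR, hst, rfl⟩ | ⟨d, hdL, hend, rfl⟩
    · left
      have hW := mem_W.mp hi
      have h1 : i ∈ S' := by
        have := hmap' (i + 1) hW.2.2.1
        rwa [hW.2.2.2] at this
      have h2 : i + 1 ∈ S' := by
        have := hmap' i hW.1
        rwa [hW.2.1] at this
      exact ⟨rfl, Finset.mem_inter.mpr ⟨hW.1, h1⟩,
        Finset.mem_inter.mpr ⟨hW.2.2.1, h2⟩, hW.2.1, hW.2.2.2⟩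
    · right; left
      refine ⟨right_S_inter hS hinj hdisp haR,
        right_S'_inter hS hinj hmap hsurj hdisp haR hst, ?_⟩
      intro i him
      rw [Finset.mem_inter] at him
      exact (mem_R.mp (mem_right_S hS hinj hdisp haR him.2 him.1)).2.1
    · right; right
      refine ⟨left_S'_inter hS hinj hmap hsurj hdisp hdL hend,
        left_S_inter hS hinj hdisp hdL, ?_⟩
      intro i him
      rw [Finset.mem_inter] at him
      exact (mem_L.mp (mem_left_S hS hinj hdisp hdL him.2 him.1)).2.1
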